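/- If preferences of all agents are strict total orders on their acceptable sets, then the housing market admits exactly one allocation in its strict core, namely the one computed by the Top Trading Cycles algorithm. -/

import Mathlib

/-- A housing market: each agent `a` has a strict partial order `pref a` on agents,
where `pref a b c` means `a` prefers the house of `c` to the house of `b` (i.e. `b ≺_a c`). -/
structure HousingMarket (N : Type) where
  pref : N → N → N → Prop
  irrefl : ∀ a b, ¬ pref a b b
  trans : ∀ a b c d, pref a b c → pref a c d → pref a b d

variable {N : Type} [Fintype N] [DecidableEq N]

/-- `(a,b)` is an arc of the acceptability graph `G^H` (including all loops). -/
def accepts (H : HousingMarket N) (a b : N) : Prop := a = b ∨ H.pref a a b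

/-- An allocation: a permutation of the agents all of whose arcs are acceptable. -/
def IsAllocation (H : HousingMarket N) (X : N → N) : Prop :=
  Function.Bijective X ∧ ∀ a, accepts H a (X a)

/-- A blocking cycle for `X`: a directed cycle of the acceptability graph (given as a
nonempty duplicate-free list, with successor `c.next`) on which every agent strictly
prefers the house of her successor to the house she gets in `X`. -/
def IsBlockingCycle (H : HousingMarket N) (X : N → N) (c : List N) : Prop :=
  c ≠ [] ∧ c.Nodup ∧
    ∀ (a : N) (h : a ∈ c), accepts H a (c.next a h) ∧ H.pref a (X a) (c.next a h)

/-- `X` is in the core of `H`. -/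
def InCore (H : HousingMarket N) (X : N → N) : Prop :=
  IsAllocation H X ∧ ∀ c : List N, ¬ IsBlockingCycle H X c

/-- A digraph (given by its arc relation `R`) has a directed cycle. -/
def HasCycle (R : N → N → Prop) : Prop :=
  ∃ c : List N, c ≠ [] ∧ c.Nodup ∧ ∀ (a : N) (h : a ∈ c), R a (c.next a h)

/-- Preferences of every agent are strict total orders on her acceptable set. -/
def StrictPrefs (H : HousingMarket N) : Prop :=
  ∀ a b c, accepts H a b → accepts H a c → b ≠ c → H.pref a b c ∨ H.pref a c b

/-- `H'` is a `(p,q)`-improvement of `H`: only `q`'s preferences change, they agree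
on `N \ {p}`, and the value of `p`'s house weakly rises for `q`. -/
def IsPQImprovement (H H' : HousingMarket N) (p q : N) : Prop :=
  (∀ a, a ≠ q → H.pref a = H'.pref a) ∧
  (∀ a b, a ≠ p → b ≠ p → (H.pref q a b ↔ H'.pref q a b)) ∧
  (∀ a, H.pref q a p → H'.pref q a p)

/-- `H'` is a `p`-improvement of `H`: a finite composition of `(p,q)`-improvements. -/
def IsPImprovement (H H' : HousingMarket N) (p : N) : Prop :=
  Relation.ReflTransGen (fun K K' => ∃ q, IsPQImprovement K K' p q) H H'

/-- A weakly blocking cycle: every agent on the cycle weakly prefers her successor's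
house to her `X`-house, and at least one strictly prefers it. -/
def IsWeaklyBlockingCycle (H : HousingMarket N) (X : N → N) (c : List N) : Prop :=
  c ≠ [] ∧ c.Nodup ∧
    (∀ (a : N) (h : a ∈ c), accepts H a (c.next a h) ∧ ¬ H.pref a (c.next a h) (X a)) ∧
    ∃ (a : N) (h : a ∈ c), H.pref a (X a) (c.next a h)

/-- The strict core. -/
def InStrictCore (H : HousingMarket N) (X : N → N) : Prop :=
  IsAllocation H X ∧ ∀ c : List N, ¬ IsWeaklyBlockingCycle H X c


lemma exists_maximal_rel {α : Type} {r : α → α → Prop}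
    (htr : ∀ a b c, r a b → r b c → r a c) (hirr : ∀ a, ¬ r a a)
    (s : Finset α) : s.Nonempty → ∃ m ∈ s, ∀ x ∈ s, ¬ r m x := by
  classical
  induction s using Finset.induction with
  | empty => rintro ⟨a, ha⟩; simp at ha
  | @insert a s ha ih =>
    intro _
    rcases s.eq_empty_or_nonempty with rfl | hne
    · refine ⟨a, Finset.mem_insert_self _ _, ?_⟩
      intro x hx
      rcases Finset.mem_insert.mp hx with rfl | hx
      · exact hirr x
      · simp at hx
    · obtain ⟨m, hm, hmax⟩ := ih hne
      by_cases hra : r m a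
      · refine ⟨a, Finset.mem_insert_self _ _, ?_⟩
        intro x hx
        rcases Finset.mem_insert.mp hx with rfl | hx
        · exact hirr x
        · exact fun hax => hmax x hx (htr m a x hra hax)
      · refine ⟨m, Finset.mem_insert_of_mem hm, ?_⟩
        intro x hx
        rcases Finset.mem_insert.mp hx with rfl | hx
        · exact hra
        · exact hmax x hx

open Classical in
/-- the pointing function of TTC on remaining set `S`: each `a ∈ S` points to her
most preferred member of `S` acceptable to her. -/
noncomputable def topf (H : HousingMarket N) (S : Finset N) (a : N) : N :=
  if h : a ∈ S then
    Classical.choose (exists_maximal_rel (H.trans a) (H.irrefl a)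
      (S.filter (fun b => accepts H a b))
      ⟨a, Finset.mem_filter.mpr ⟨h, Or.inl rfl⟩⟩)
  else a

lemma topf_spec {H : HousingMarket N} {S : Finset N} {a : N} (h : a ∈ S) :
    topf H S a ∈ S ∧ accepts H a (topf H S a) ∧
      ∀ b ∈ S, accepts H a b → ¬ H.pref a (topf H S a) b := by
  classical
  rw [topf, dif_pos h]
  have hsp := Classical.choose_spec (exists_maximal_rel (H.trans a) (H.irrefl a)
      (S.filter (fun b => accepts H a b))
      ⟨a, Finset.mem_filter.mpr ⟨h, Or.inl rfl⟩⟩)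
  obtain ⟨hm, hmax⟩ := hsp
  rw [Finset.mem_filter] at hm
  exact ⟨hm.1, hm.2, fun b hb hab => hmax b (Finset.mem_filter.mpr ⟨hb, hab⟩)⟩

lemma topf_iter_mem {H : HousingMarket N} {S : Finset N} {a : N} (h : a ∈ S) (n : ℕ) :
    (topf H S)^[n] a ∈ S := by
  induction n with
  | zero => exact h
  | succ n ihn => rw [Function.iterate_succ_apply']; exact (topf_spec ihn).1

/-- agents lying on a cycle of the pointing digraph on `S`. -/
noncomputable def per (H : HousingMarket N) (S : Finset N) : Finset N :=
  @Finset.filter N (fun a => ∃ k, 0 < k ∧ (topf H S)^[k] a = a) (Classical.decPred _) S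

lemma mem_per {H : HousingMarket N} {S : Finset N} {a : N} :
    a ∈ per H S ↔ a ∈ S ∧ ∃ k, 0 < k ∧ (topf H S)^[k] a = a := by
  classical
  simp [per]

lemma per_subset {H : HousingMarket N} {S : Finset N} : per H S ⊆ S :=
  fun x hx => (mem_per.mp hx).1

lemma per_nonempty {H : HousingMarket N} {S : Finset N} (hS : S.Nonempty) :
    (per H S).Nonempty := by
  obtain ⟨a, ha⟩ := hS
  obtain ⟨m, n, hmn, he⟩ := Finite.exists_ne_map_eq_of_infinite (fun n : ℕ => (topf H S)^[n] a)
  rcases Ne.lt_or_gt hmn with h | h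
  · refine ⟨(topf H S)^[m] a, mem_per.mpr ⟨topf_iter_mem ha m, n - m, by omega, ?_⟩⟩
    rw [← Function.iterate_add_apply]
    have : n - m + m = n := by omega
    rw [this, ← he]
  · refine ⟨(topf H S)^[n] a, mem_per.mpr ⟨topf_iter_mem ha n, m - n, by omega, ?_⟩⟩
    rw [← Function.iterate_add_apply]
    have : m - n + n = m := by omega
    rw [this, he]

lemma topf_mem_per {H : HousingMarket N} {S : Finset N} {a : N} (h : a ∈ per H S) :
    topf H S a ∈ per H S := by
  obtain ⟨haS, k, hk, hfix⟩ := mem_per.mp h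
  refine mem_per.mpr ⟨(topf_spec haS).1, k, hk, ?_⟩
  rw [← Function.iterate_succ_apply, Function.iterate_succ_apply', hfix]

lemma topf_iter_mem_per {H : HousingMarket N} {S : Finset N} {a : N} (h : a ∈ per H S) (n : ℕ) :
    (topf H S)^[n] a ∈ per H S := by
  induction n with
  | zero => exact h
  | succ n ihn => rw [Function.iterate_succ_apply']; exact topf_mem_per ihn

lemma topf_injOn_per {H : HousingMarket N} {S : Finset N} {a b : N}
    (ha : a ∈ per H S) (hb : b ∈ per H S) (h : topf H S a = topf H S b) : a = b := by
  obtain ⟨-, k, hk, hka⟩ := mem_per.mp ha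
  obtain ⟨-, l, hl, hlb⟩ := mem_per.mp hb
  have h1 : (topf H S)^[k * l] a = a := by
    rw [Function.iterate_mul]; exact Function.iterate_fixed hka l
  have h2 : (topf H S)^[k * l] b = b := by
    rw [mul_comm, Function.iterate_mul]; exact Function.iterate_fixed hlb k
  have hkl : k * l = (k * l - 1) + 1 := by
    have : 0 < k * l := Nat.mul_pos hk hl
    omega
  have e : ∀ x : N, (topf H S)^[k * l] x = (topf H S)^[k * l - 1] (topf H S x) := by
    intro x
    conv_lhs => rw [hkl]
    rw [Function.iterate_succ_apply]
  calc a = (topf H S)^[k * l] a := h1.symm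
    _ = (topf H S)^[k * l - 1] (topf H S a) := e a
    _ = (topf H S)^[k * l - 1] (topf H S b) := by rw [h]
    _ = (topf H S)^[k * l] b := (e b).symm
    _ = b := h2

lemma topf_surjOn_per {H : HousingMarket N} {S : Finset N} {b : N} (hb : b ∈ per H S) :
    ∃ a ∈ per H S, topf H S a = b := by
  obtain ⟨-, k, hk, hkb⟩ := mem_per.mp hb
  refine ⟨(topf H S)^[k - 1] b, topf_iter_mem_per hb _, ?_⟩
  rw [← Function.iterate_succ_apply' (topf H S) (k - 1) b]
  have hsucc : (k - 1).succ = k := by omega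
  rw [hsucc, hkb]

theorem List.next_get {α : Type} [DecidableEq α] (l : List α) (h : l.Nodup) (i : Fin l.length) :
    l.next (l.get i) (List.get_mem _ _) =
      l.get ⟨(i.1 + 1) % l.length, Nat.mod_lt _ (i.1.zero_le.trans_lt i.2)⟩ := by
  simpa using List.next_getElem l h i.1 i.2

/-- closure along a cycle list: a property preserved by `next` and holding somewhere
on the list holds everywhere on it. -/
lemma next_closure {c : List N} (hnd : c.Nodup) (Q : N → Prop)
    (hstep : ∀ x (hx : x ∈ c), Q x → Q (c.next x hx))
    {a : N} (ha : a ∈ c) (hQa : Q a) : ∀ b ∈ c, Q b := by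
  obtain ⟨i, hi⟩ := List.mem_iff_get.mp ha
  subst hi
  intro b hb
  obtain ⟨j, hj⟩ := List.mem_iff_get.mp hb
  subst hj
  have hlen : 0 < c.length := i.1.zero_le.trans_lt i.2
  have key : ∀ n : ℕ, Q (c.get ⟨(i.1 + n) % c.length, Nat.mod_lt _ hlen⟩) := by
    intro n
    induction n with
    | zero =>
      have h0 : (i.1 + 0) % c.length = i.1 := by
        simp [Nat.mod_eq_of_lt i.2]
      convert hQa using 2
      exact Fin.ext h0
    | succ n ihn =>
      have hmem : c.get ⟨(i.1 + n) % c.length, Nat.mod_lt _ hlen⟩ ∈ c := List.get_mem _ _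
      have hs := hstep _ hmem ihn
      rw [List.next_get c hnd ⟨(i.1 + n) % c.length, Nat.mod_lt _ hlen⟩] at hs
      convert hs using 2
      exact Fin.ext (by rw [← Nat.add_assoc]; exact (Nat.mod_add_mod _ _ _).symm)
  have := key (c.length + j.1 - i.1)
  have h1 : (i.1 + (c.length + j.1 - i.1)) % c.length = j.1 := by
    have hi2 := i.2
    have hj2 := j.2
    have : i.1 + (c.length + j.1 - i.1) = c.length + j.1 := by omega
    rw [this, Nat.add_mod_left, Nat.mod_eq_of_lt hj2]
  convert this using 2
  exact Fin.ext h1.symm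

/-- core property relativized to a set `S` of remaining agents. -/
def CoreOn (H : HousingMarket N) (S : Finset N) (X : N → N) : Prop :=
  (∀ a, a ∉ S → X a = a) ∧ Function.Bijective X ∧
    (∀ a ∈ S, X a ∈ S ∧ accepts H a (X a)) ∧
    ∀ c : List N, (∀ a ∈ c, a ∈ S) → ¬ IsWeaklyBlockingCycle H X c

lemma next_elem_congr {α : Type} [DecidableEq α] (c : List α) {x y : α} (h : x = y)
    (hx : x ∈ c) : c.next x hx = c.next y (h ▸ hx) := by subst h; rfl

lemma blocking_congr {H : HousingMarket N} {X Y : N → N} {c : List N}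
    (h : ∀ a ∈ c, X a = Y a) (hb : IsWeaklyBlockingCycle H X c) :
    IsWeaklyBlockingCycle H Y c := by
  obtain ⟨h1, h2, h3, a, ha, h4⟩ := hb
  exact ⟨h1, h2, fun x hx => ⟨(h3 x hx).1, by rw [← h x hx]; exact (h3 x hx).2⟩, a, ha,
    by rw [← h a ha]; exact h4⟩

/-- every allocation satisfying `CoreOn H S` agrees with the pointing function on
the agents lying on cycles of the pointing digraph. -/
lemma core_agrees {H : HousingMarket N} (hstrict : StrictPrefs H) {S : Finset N} {X : N → N}
    (hX : CoreOn H S X) : ∀ a ∈ per H S, X a = topf H S a := by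
  classical
  intro a ha
  by_contra hne
  obtain ⟨haS, hex⟩ := mem_per.mp ha
  set k := Nat.find hex with hkdef
  obtain ⟨hkpos, hfix⟩ : 0 < k ∧ (topf H S)^[k] a = a := Nat.find_spec hex
  have hmin : ∀ j, 0 < j → j < k → (topf H S)^[j] a ≠ a := by
    intro j hj hjk hje
    exact Nat.find_min hex hjk ⟨hj, hje⟩
  set c : List N := (List.range k).map (fun i => (topf H S)^[i] a) with hc
  have hlen : c.length = k := by simp [hc]
  have hmemc : ∀ i, i < k → (topf H S)^[i] a ∈ c := by
    intro i hik; rw [hc]; exact List.mem_map.mpr ⟨i, List.mem_range.mpr hik, rfl⟩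
  have hmemc' : ∀ x ∈ c, ∃ i, i < k ∧ x = (topf H S)^[i] a := by
    intro x hx; rw [hc] at hx
    obtain ⟨i, hi, rfl⟩ := List.mem_map.mp hx
    exact ⟨i, List.mem_range.mp hi, rfl⟩
  have hmemS : ∀ x ∈ c, x ∈ S := by
    intro x hx; obtain ⟨i, -, rfl⟩ := hmemc' x hx; exact topf_iter_mem haS i
  have hinj : ∀ i j, i < k → j < k → (topf H S)^[i] a = (topf H S)^[j] a → i = j := by
    intro i j hik hjk hije
    by_contra hij
    rcases Nat.lt_or_ge i j with h | h
    · have h2 : (topf H S)^[(k - j) + j] a = (topf H S)^[(k - j) + i] a := by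
        rw [Function.iterate_add_apply, Function.iterate_add_apply, hije]
      rw [show k - j + j = k from by omega, hfix] at h2
      exact hmin (k - j + i) (by omega) (by omega) h2.symm
    · have h' : j < i := by omega
      have h2 : (topf H S)^[(k - i) + i] a = (topf H S)^[(k - i) + j] a := by
        rw [Function.iterate_add_apply, Function.iterate_add_apply, hije]
      rw [show k - i + i = k from by omega, hfix] at h2
      exact hmin (k - i + j) (by omega) (by omega) h2.symm
  have hnd : c.Nodup := by
    rw [hc]
    refine List.Nodup.map_on ?_ (List.nodup_range (n := k))
    intro i hi j hj hije
    exact hinj i j (List.mem_range.mp hi) (List.mem_range.mp hj) hije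
  have hget : ∀ (i : ℕ) (hi : i < c.length), c.get ⟨i, hi⟩ = (topf H S)^[i] a := by
    intro i hi
    simp [hc]
  have hnext : ∀ x (hx : x ∈ c), c.next x hx = topf H S x := by
    intro x hx
    obtain ⟨i, hik, rfl⟩ := hmemc' x hx
    have hi : i < c.length := by omega
    have hgi : (topf H S)^[i] a = c.get ⟨i, hi⟩ := (hget i hi).symm
    have h1 : c.next ((topf H S)^[i] a) hx =
        c.get ⟨(i + 1) % c.length, Nat.mod_lt _ (by omega)⟩ := by
      rw [next_elem_congr c hgi hx]
      exact List.next_get c hnd ⟨i, hi⟩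
    rcases Nat.lt_or_ge (i + 1) k with h2 | h2
    · have e : (i + 1) % c.length = i + 1 := by rw [hlen]; exact Nat.mod_eq_of_lt h2
      rw [h1, hget ((i + 1) % c.length) (Nat.mod_lt _ (by omega)), e,
        Function.iterate_succ_apply']
    · have hik1 : i + 1 = k := by omega
      have e : (i + 1) % c.length = 0 := by rw [hlen, hik1, Nat.mod_self]
      rw [h1, hget ((i + 1) % c.length) (Nat.mod_lt _ (by omega)), e]
      show a = topf H S ((topf H S)^[i] a)
      rw [← Function.iterate_succ_apply' (topf H S) i a]
      have : i.succ = k := hik1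
      rw [this, hfix]
  refine hX.2.2.2 c hmemS ⟨?_, hnd, ?_, ?_⟩
  · intro h0
    rw [h0] at hlen
    simp at hlen
    omega
  · intro x hx
    rw [hnext x hx]
    have hxS := hmemS x hx
    obtain ⟨hts, hta, htmax⟩ := topf_spec (H := H) hxS
    exact ⟨hta, htmax (X x) (hX.2.2.1 x hxS).1 (hX.2.2.1 x hxS).2⟩
  · have hac : a ∈ c := by simpa using hmemc 0 hkpos
    refine ⟨a, hac, ?_⟩
    rw [hnext a hac]
    obtain ⟨hts, hta, htmax⟩ := topf_spec (H := H) haS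
    rcases hstrict a (X a) (topf H S a) (hX.2.2.1 a haS).2 hta hne with h | h
    · exact h
    · exact absurd h (htmax (X a) (hX.2.2.1 a haS).1 (hX.2.2.1 a haS).2)

theorem coreOn_existsUnique {H : HousingMarket N} (hstrict : StrictPrefs H) (S : Finset N) :
    ∃! X : N → N, CoreOn H S X := by
  induction S using Finset.strongInduction with
  | _ S ih =>
  rcases S.eq_empty_or_nonempty with rfl | hS
  · refine ⟨id, ⟨fun a _ => rfl, Function.bijective_id, fun a ha => absurd ha (by simp), ?_⟩, ?_⟩
    · rintro c hc ⟨hne, -, -, -⟩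
      match c with
      | [] => exact hne rfl
      | a :: c => exact absurd (hc a (by simp)) (by simp)
    · intro Y hY
      funext a
      exact hY.1 a (by simp)
  · have hPS : per H S ⊆ S := per_subset
    have hPne : (per H S).Nonempty := per_nonempty hS
    obtain ⟨X₀, hX₀, huniq₀⟩ := ih (S \ per H S) (Finset.sdiff_ssubset hPS hPne)
    obtain ⟨hX₀out, hX₀bij, hX₀mem, hX₀blk⟩ := hX₀
    set X : N → N := fun a => if a ∈ per H S then topf H S a else X₀ a with hXdef
    have hXP : ∀ a ∈ per H S, X a = topf H S a := fun a ha => by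
      simp only [hXdef]; exact if_pos ha
    have hXnP : ∀ a, a ∉ per H S → X a = X₀ a := fun a ha => by
      simp only [hXdef]; exact if_neg ha
    have hXout : ∀ a, a ∉ S → X a = a := by
      intro a ha
      rw [hXnP a (fun h => ha (hPS h))]
      exact hX₀out a (fun h => ha (Finset.mem_sdiff.mp h).1)
    have hXmem : ∀ a ∈ S, X a ∈ S ∧ accepts H a (X a) := by
      intro a ha
      by_cases hp : a ∈ per H S
      · rw [hXP a hp]
        exact ⟨(topf_spec ha).1, (topf_spec ha).2.1⟩
      · rw [hXnP a hp]
        have h := hX₀mem a (Finset.mem_sdiff.mpr ⟨ha, hp⟩)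
        exact ⟨(Finset.mem_sdiff.mp h.1).1, h.2⟩
    have hXmemP : ∀ a ∈ per H S, X a ∈ per H S := by
      intro a ha; rw [hXP a ha]; exact topf_mem_per ha
    have hXmemSP : ∀ a ∈ S \ per H S, X a ∈ S \ per H S := by
      intro a ha; rw [hXnP a (Finset.mem_sdiff.mp ha).2]; exact (hX₀mem a ha).1
    have hXinj : Function.Injective X := by
      intro u v huv
      by_cases hu : u ∈ per H S <;> by_cases hv : v ∈ per H S
      · rw [hXP u hu, hXP v hv] at huv; exact topf_injOn_per hu hv huv
      · exfalso
        have h1 : X u ∈ per H S := hXmemP u hu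
        by_cases hvs : v ∈ S
        · have h2 : X v ∈ S \ per H S := hXmemSP v (Finset.mem_sdiff.mpr ⟨hvs, hv⟩)
          rw [huv] at h1; exact (Finset.mem_sdiff.mp h2).2 h1
        · rw [huv, hXout v hvs] at h1; exact hvs (hPS h1)
      · exfalso
        have h1 : X v ∈ per H S := hXmemP v hv
        by_cases hus : u ∈ S
        · have h2 : X u ∈ S \ per H S := hXmemSP u (Finset.mem_sdiff.mpr ⟨hus, hu⟩)
          rw [← huv] at h1; exact (Finset.mem_sdiff.mp h2).2 h1
        · rw [← huv, hXout u hus] at h1; exact hus (hPS h1)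
      · rw [hXnP u hu, hXnP v hv] at huv; exact hX₀bij.1 huv
    have hXbij : Function.Bijective X := Finite.injective_iff_bijective.mp hXinj
    have hXblk : ∀ c : List N, (∀ a ∈ c, a ∈ S) → ¬ IsWeaklyBlockingCycle H X c := by
      intro c hc hb
      by_cases hcp : ∃ x, x ∈ c ∧ x ∈ per H S
      · obtain ⟨x0, hx0c, hx0P⟩ := hcp
        obtain ⟨hcne, hcnd, hweak, a, hac, hsp⟩ := hb
        have hstep : ∀ x (hx : x ∈ c), x ∈ per H S →
            c.next x hx ∈ per H S ∧ c.next x hx = X x := by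
          intro x hx hxP
          have hXx : X x = topf H S x := hXP x hxP
          have hxS : x ∈ S := hc x hx
          obtain ⟨-, hta, htmax⟩ := topf_spec (H := H) hxS
          have hnS : c.next x hx ∈ S := hc _ (List.next_mem c x hx)
          have hacc := (hweak x hx).1
          have heq : c.next x hx = topf H S x := by
            by_contra hne2
            rcases hstrict x (c.next x hx) (topf H S x) hacc hta hne2 with h | h
            · exact (hweak x hx).2 (by rw [hXx]; exact h)
            · exact htmax _ hnS hacc h
          have heq2 : c.next x hx = X x := by rw [heq, hXx]
          exact ⟨heq2 ▸ hXmemP x hxP, heq2⟩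
        have hallP : ∀ b ∈ c, b ∈ per H S :=
          next_closure hcnd (fun b => b ∈ per H S) (fun x hx hxP => (hstep x hx hxP).1) hx0c hx0P
        have heqa : c.next a hac = X a := (hstep a hac (hallP a hac)).2
        rw [heqa] at hsp
        exact H.irrefl a (X a) hsp
      · push_neg at hcp
        exact hX₀blk c (fun a ha => Finset.mem_sdiff.mpr ⟨hc a ha, hcp a ha⟩)
          (blocking_congr (fun a ha => hXnP a (hcp a ha)) hb)
    refine ⟨X, ⟨hXout, hXbij, hXmem, hXblk⟩, ?_⟩
    intro Y hY
    obtain ⟨hYout, hYbij, hYmem, hYblk⟩ := hY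
    have hYP : ∀ a ∈ per H S, Y a = topf H S a :=
      core_agrees hstrict ⟨hYout, hYbij, hYmem, hYblk⟩
    have hYSP : ∀ a ∈ S \ per H S, Y a ∈ S \ per H S := by
      intro a ha
      obtain ⟨haS, haP⟩ := Finset.mem_sdiff.mp ha
      refine Finset.mem_sdiff.mpr ⟨(hYmem a haS).1, ?_⟩
      intro hYaP
      obtain ⟨b, hbP, hfb⟩ := topf_surjOn_per hYaP
      have hba : Y b = Y a := by rw [hYP b hbP, hfb]
      have : b = a := hYbij.1 hba
      rw [this] at hbP
      exact haP hbP
    set Y' : N → N := fun a => if a ∈ S \ per H S then Y a else a with hY'def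
    have hY'in : ∀ a ∈ S \ per H S, Y' a = Y a := fun a ha => by
      simp only [hY'def]; exact if_pos ha
    have hY'out : ∀ a, a ∉ S \ per H S → Y' a = a := fun a ha => by
      simp only [hY'def]; exact if_neg ha
    have hY'inj : Function.Injective Y' := by
      intro u v huv
      by_cases hu : u ∈ S \ per H S <;> by_cases hv : v ∈ S \ per H S
      · rw [hY'in u hu, hY'in v hv] at huv; exact hYbij.1 huv
      · exfalso
        rw [hY'in u hu, hY'out v hv] at huv
        have : v ∈ S \ per H S := by rw [← huv]; exact hYSP u hu
        exact hv this
      · exfalso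
        rw [hY'out u hu, hY'in v hv] at huv
        have : u ∈ S \ per H S := by rw [huv]; exact hYSP v hv
        exact hu this
      · rw [hY'out u hu, hY'out v hv] at huv; exact huv
    have hY'core : CoreOn H (S \ per H S) Y' := by
      refine ⟨hY'out, Finite.injective_iff_bijective.mp hY'inj, ?_, ?_⟩
      · intro a ha
        rw [hY'in a ha]
        exact ⟨hYSP a ha, (hYmem a (Finset.mem_sdiff.mp ha).1).2⟩
      · intro c hc hb
        exact hYblk c (fun a ha => (Finset.mem_sdiff.mp (hc a ha)).1)
          (blocking_congr (fun a ha => hY'in a (hc a ha)) hb)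
    have hYX₀ : Y' = X₀ := huniq₀ Y' hY'core
    funext a
    by_cases hp : a ∈ per H S
    · rw [hYP a hp, hXP a hp]
    · by_cases hs : a ∈ S
      · have hsp : a ∈ S \ per H S := Finset.mem_sdiff.mpr ⟨hs, hp⟩
        rw [hXnP a hp, ← hY'in a hsp, hYX₀]
      · rw [hYout a hs, hXout a hs]

/-- with strict total preferences on acceptable sets, the strict core
consists of exactly one allocation (the TTC allocation). -/
theorem stmt3 (H : HousingMarket N) (hstrict : StrictPrefs H) :
    ∃! X : N → N, InStrictCore H X := by
  obtain ⟨X, hX, huniq⟩ := coreOn_existsUnique hstrict Finset.univ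
  refine ⟨X, ?_, ?_⟩
  · obtain ⟨-, hbij, hmem, hblk⟩ := hX
    exact ⟨⟨hbij, fun a => (hmem a (Finset.mem_univ a)).2⟩,
      fun c => hblk c (fun a _ => Finset.mem_univ a)⟩
  · intro Y hY
    exact huniq Y ⟨fun a ha => absurd (Finset.mem_univ a) ha, hY.1.1,
      fun a _ => ⟨Finset.mem_univ _, hY.1.2 a⟩, fun c _ => hY.2 c⟩
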